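/- Marginal coverage of hierarchical conformal prediction (HCP), upper bound: Suppose the groups Z̃_1,…,Z̃_{K+1} satisfy hierarchical exchangeability, the HCP prediction set Ĉ at level α ∈ (0,1) is constructed from training groups Z̃_1,…,Z̃_{K₀} and calibration groups Z̃_{K₀+1},…,Z̃_K, the test point is (X_test, Y_test) = Z_{K+1,1}, and additionally s(Z_{k,i}) ≠ s(Z_{k',i'}) almost surely for all pairs of indices with k ≠ k' among the calibration and test groups. Then P(Y_test ∈ Ĉ(X_test)) ≤ 1 − α + 2/(K₁ + 1). -/

import Mathlib

open MeasureTheory ProbabilityTheory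
open scoped ENNReal

noncomputable section

/-- Extend a permutation of `Fin m` to `ℕ` by the identity outside `{0, …, m-1}`. -/
def permExt {m : ℕ} (σ : Equiv.Perm (Fin m)) : ℕ → ℕ :=
  fun i => if h : i < m then (σ ⟨i, h⟩ : ℕ) else i

/-- The representation of the groups `0, …, L-1` of a hierarchical data set:
group `k` is recorded as the pair of its size `N k ω` and its sequence of observations. -/
def hierData {Ω 𝒵 : Type*} (L : ℕ) (N : ℕ → Ω → ℕ) (Z : ℕ → ℕ → Ω → 𝒵) :
    Ω → Fin L → ℕ × (ℕ → 𝒵) :=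
  fun ω k => (N k.1 ω, fun i => Z k.1 i ω)

/-- Hierarchical exchangeability (Definition 1.1) of the groups `0, …, L-1`:
(i) the groups are exchangeable with each other, and (ii) for each `k` and each `m`
with `P(N_k = m) > 0`, conditionally on `N_k = m` the first `m` observations within
group `k` are exchangeable. -/
def HierExch {Ω 𝒵 : Type*} [MeasurableSpace Ω] [MeasurableSpace 𝒵] (L : ℕ)
    (P : Measure Ω) (N : ℕ → Ω → ℕ) (Z : ℕ → ℕ → Ω → 𝒵) : Prop :=
  (∀ σ : Equiv.Perm (Fin L),
      Measure.map (fun ω => fun k : Fin L => hierData L N Z ω (σ k)) P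
        = Measure.map (hierData L N Z) P) ∧
  (∀ k, k < L → ∀ m : ℕ, 0 < P {ω | N k ω = m} → ∀ σ : Equiv.Perm (Fin m),
      Measure.map
          (hierData L N fun k' i => if k' = k then Z k' (permExt σ i) else Z k' i)
          (ProbabilityTheory.cond P {ω | N k ω = m})
        = Measure.map (hierData L N Z) (ProbabilityTheory.cond P {ω | N k ω = m}))

/-- The `(1-β)`-quantile `Q_{1-β}(μ) = inf {t : μ((-∞, t]) ≥ 1-β}` of a distribution `μ`
on the extended real line. -/
def erealQuantile (β : ℝ) (μ : Measure EReal) : EReal :=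
  sInf {t : EReal | ENNReal.ofReal β ≤ μ (Set.Iic t)}

/-- The HCP threshold: the `(1-α)`-quantile of the weighted empirical distribution
`Σ_{k=K₀}^{K-1} Σ_{i<n k} (1/((K₁+1)·(n k))) δ_{sc k i} + (1/(K₁+1)) δ_{+∞}`,
where `K₁ = K - K₀`. -/
def hcpThreshold (α : ℝ) (K₀ K : ℕ) (n : ℕ → ℕ) (sc : ℕ → ℕ → ℝ) : EReal :=
  erealQuantile (1 - α)
    ((∑ k ∈ Finset.Ico K₀ K, ∑ i ∈ Finset.range (n k),
        (((K - K₀ + 1 : ℕ) : ℝ≥0∞) * (n k : ℝ≥0∞))⁻¹ • Measure.dirac ((sc k i : EReal)))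
      + (((K - K₀ + 1 : ℕ) : ℝ≥0∞))⁻¹ • Measure.dirac (⊤ : EReal))

section HCPAux

open Finset


lemma nat_inv_mul_le_one (m : ℕ) : ((m : ℝ≥0∞))⁻¹ * m ≤ 1 := by
  rcases eq_or_ne (m : ℝ≥0∞) 0 with h | h
  · simp [h]
  · rw [ENNReal.inv_mul_cancel h (by simp)]

lemma nat_mul_inv_le_one (m : ℕ) : (m : ℝ≥0∞) * ((m : ℝ≥0∞))⁻¹ ≤ 1 := by
  rw [mul_comm]; exact nat_inv_mul_le_one m

lemma count_lemma (G : Finset ℕ) (n : ℕ → ℕ) (s : ℕ → ℕ → ℝ) (x : ℝ≥0∞)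
    (hd : ∀ k ∈ G, ∀ k' ∈ G, k ≠ k' → ∀ i < n k, ∀ i' < n k', s k i ≠ s k' i') :
    ∑ j ∈ G, ((n j : ℝ≥0∞))⁻¹ *
      ∑ i ∈ range (n j),
        (if (∑ k ∈ G.erase j, ((n k : ℝ≥0∞))⁻¹ *
              ∑ i' ∈ range (n k), (if s k i' < s j i then (1:ℝ≥0∞) else 0)) ≤ x
          then (1:ℝ≥0∞) else 0) ≤ x + 2 := by
  classical
  set g : ℝ → ℝ≥0∞ := fun t => ∑ k ∈ G, ((n k : ℝ≥0∞))⁻¹ *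
      ∑ i' ∈ range (n k), (if s k i' < t then (1:ℝ≥0∞) else 0) with hg
  set cv : ℕ → ℕ → ℝ≥0∞ := fun j i => ∑ k ∈ G.erase j, ((n k : ℝ≥0∞))⁻¹ *
      ∑ i' ∈ range (n k), (if s k i' < s j i then (1:ℝ≥0∞) else 0) with hcv
  have own_le : ∀ (j : ℕ) (t : ℝ),
      ((n j : ℝ≥0∞))⁻¹ * ∑ i' ∈ range (n j), (if s j i' < t then (1:ℝ≥0∞) else 0) ≤ 1 := by
    intro j t
    calc ((n j : ℝ≥0∞))⁻¹ * ∑ i' ∈ range (n j), (if s j i' < t then (1:ℝ≥0∞) else 0)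
        ≤ ((n j : ℝ≥0∞))⁻¹ * ∑ _i' ∈ range (n j), (1:ℝ≥0∞) := by
          gcongr with i hi; split <;> simp
      _ = ((n j : ℝ≥0∞))⁻¹ * (n j : ℝ≥0∞) := by simp [mul_comm]
      _ ≤ 1 := nat_inv_mul_le_one _
  have stepA : ∀ j ∈ G, ∀ i : ℕ, cv j i ≤ x → g (s j i) ≤ x + 1 := by
    intro j hj i hcvle
    have hsplit : g (s j i) = cv j i + ((n j : ℝ≥0∞))⁻¹ *
        ∑ i' ∈ range (n j), (if s j i' < s j i then (1:ℝ≥0∞) else 0) := by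
      rw [hg, hcv]
      exact (Finset.sum_erase_add G _ hj).symm
    rw [hsplit]
    exact add_le_add hcvle (own_le j (s j i))
  -- rewrite LHS as a sum over the sigma finset
  set Sig : Finset ((_ : ℕ) × ℕ) := G.sigma (fun j => range (n j)) with hSig
  have hLHS : (∑ j ∈ G, ((n j : ℝ≥0∞))⁻¹ *
      ∑ i ∈ range (n j), (if cv j i ≤ x then (1:ℝ≥0∞) else 0))
      = ∑ p ∈ Sig.filter (fun p => cv p.1 p.2 ≤ x), ((n p.1 : ℝ≥0∞))⁻¹ := by
    rw [Finset.sum_filter, hSig, Finset.sum_sigma]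
    refine Finset.sum_congr rfl fun j hj => ?_
    rw [Finset.mul_sum]
    refine Finset.sum_congr rfl fun i hi => ?_
    split <;> simp
  rw [hLHS]
  set S := Sig.filter (fun p => cv p.1 p.2 ≤ x) with hS
  rcases S.eq_empty_or_nonempty with he | hne
  · rw [he]; simp
  · obtain ⟨p₀, hp₀, hmax⟩ := Finset.exists_max_image S (fun p => s p.1 p.2) hne
    have hp₀Sig : p₀ ∈ Sig := (Finset.mem_filter.mp hp₀).1
    have hp₀G : p₀.1 ∈ G := (Finset.mem_sigma.mp hp₀Sig).1
    have hp₀n : p₀.2 ∈ range (n p₀.1) := (Finset.mem_sigma.mp hp₀Sig).2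
    have hp₀cv : cv p₀.1 p₀.2 ≤ x := (Finset.mem_filter.mp hp₀).2
    set v : ℝ := s p₀.1 p₀.2 with hv
    -- split S
    have hsplitS : ∑ p ∈ S, ((n p.1 : ℝ≥0∞))⁻¹
        = ∑ p ∈ S.filter (fun p => s p.1 p.2 < v), ((n p.1 : ℝ≥0∞))⁻¹
          + ∑ p ∈ S.filter (fun p => ¬ s p.1 p.2 < v), ((n p.1 : ℝ≥0∞))⁻¹ :=
      (Finset.sum_filter_add_sum_filter_not S _ _).symm
    have hb1 : ∑ p ∈ S.filter (fun p => s p.1 p.2 < v), ((n p.1 : ℝ≥0∞))⁻¹ ≤ x + 1 := by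
      have hsub : S.filter (fun p => s p.1 p.2 < v) ⊆ Sig.filter (fun p => s p.1 p.2 < v) := by
        intro p hp
        rw [Finset.mem_filter] at hp ⊢
        exact ⟨(Finset.mem_filter.mp hp.1).1, hp.2⟩
      have h1 : ∑ p ∈ S.filter (fun p => s p.1 p.2 < v), ((n p.1 : ℝ≥0∞))⁻¹
          ≤ ∑ p ∈ Sig.filter (fun p => s p.1 p.2 < v), ((n p.1 : ℝ≥0∞))⁻¹ :=
        Finset.sum_le_sum_of_subset hsub
      have h2 : ∑ p ∈ Sig.filter (fun p => s p.1 p.2 < v), ((n p.1 : ℝ≥0∞))⁻¹ = g v := by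
        rw [Finset.sum_filter, hSig, Finset.sum_sigma, hg]
        refine Finset.sum_congr rfl fun j hj => ?_
        rw [Finset.mul_sum]
        refine Finset.sum_congr rfl fun i hi => ?_
        split <;> simp
      exact h1.trans (h2 ▸ stepA p₀.1 hp₀G p₀.2 hp₀cv)
    have hb2 : ∑ p ∈ S.filter (fun p => ¬ s p.1 p.2 < v), ((n p.1 : ℝ≥0∞))⁻¹ ≤ 1 := by
      have hsub : S.filter (fun p => ¬ s p.1 p.2 < v) ⊆ Sig.filter (fun p => p.1 = p₀.1) := by
        intro p hp
        rw [Finset.mem_filter] at hp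
        obtain ⟨hpS, hnlt⟩ := hp
        have hpSig : p ∈ Sig := (Finset.mem_filter.mp hpS).1
        have hple : s p.1 p.2 ≤ v := hmax p hpS
        have heqv : s p.1 p.2 = v := le_antisymm hple (not_lt.mp hnlt)
        rw [Finset.mem_filter]
        refine ⟨hpSig, ?_⟩
        by_contra hne'
        exact hd p.1 (Finset.mem_sigma.mp hpSig).1 p₀.1 hp₀G hne'
          p.2 (Finset.mem_range.mp (Finset.mem_sigma.mp hpSig).2)
          p₀.2 (Finset.mem_range.mp hp₀n) (heqv.trans hv)
      have h1 : ∑ p ∈ S.filter (fun p => ¬ s p.1 p.2 < v), ((n p.1 : ℝ≥0∞))⁻¹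
          ≤ ∑ p ∈ Sig.filter (fun p => p.1 = p₀.1), ((n p.1 : ℝ≥0∞))⁻¹ :=
        Finset.sum_le_sum_of_subset hsub
      have h2 : ∑ p ∈ Sig.filter (fun p => p.1 = p₀.1), ((n p.1 : ℝ≥0∞))⁻¹ ≤ 1 := by
        rw [Finset.sum_filter, hSig, Finset.sum_sigma]
        have : ∀ j ∈ G, (∑ i ∈ range (n j), if j = p₀.1 then ((n j : ℝ≥0∞))⁻¹ else 0)
            = if j = p₀.1 then (n j : ℝ≥0∞) * ((n j : ℝ≥0∞))⁻¹ else 0 := by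
          intro j hj
          split <;> simp [mul_comm]
        rw [Finset.sum_congr rfl this, Finset.sum_ite_eq' G p₀.1
          (fun j => (n j : ℝ≥0∞) * ((n j : ℝ≥0∞))⁻¹), if_pos hp₀G]
        exact nat_mul_inv_le_one _
      exact h1.trans h2
    calc ∑ p ∈ S, ((n p.1 : ℝ≥0∞))⁻¹ = _ + _ := hsplitS
      _ ≤ (x + 1) + 1 := add_le_add hb1 hb2
      _ = x + 2 := by ring

lemma quantile_lemma (α : ℝ) (K₀ K : ℕ) (n : ℕ → ℕ) (sc : ℕ → ℕ → ℝ)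
    (hq : ((sc K 0 : ℝ) : EReal) ≤ hcpThreshold α K₀ K n sc) :
    ∑ k ∈ Finset.Ico K₀ K, (((K - K₀ + 1 : ℕ) : ℝ≥0∞) * (n k : ℝ≥0∞))⁻¹ *
        ∑ i ∈ Finset.range (n k), (if sc k i < sc K 0 then (1:ℝ≥0∞) else 0)
      ≤ ENNReal.ofReal (1 - α) := by
  classical
  set μ : Measure EReal :=
    (∑ k ∈ Finset.Ico K₀ K, ∑ i ∈ Finset.range (n k),
        (((K - K₀ + 1 : ℕ) : ℝ≥0∞) * (n k : ℝ≥0∞))⁻¹ • Measure.dirac ((sc k i : EReal)))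
      + (((K - K₀ + 1 : ℕ) : ℝ≥0∞))⁻¹ • Measure.dirac (⊤ : EReal) with hμ
  have hIic : ∀ u : ℝ, u < sc K 0 → μ (Set.Iic (u : EReal)) < ENNReal.ofReal (1 - α) := by
    intro u hu
    by_contra hcon
    have h1 : hcpThreshold α K₀ K n sc ≤ (u : EReal) :=
      sInf_le (not_lt.mp hcon)
    have h2 : ((sc K 0 : ℝ) : EReal) ≤ (u : EReal) := hq.trans h1
    exact absurd (EReal.coe_le_coe_iff.mp h2) (not_le.mpr hu)
  have hunion : Set.Iio ((sc K 0 : ℝ) : EReal)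
      = ⋃ m : ℕ, Set.Iic ((sc K 0 - 1 / (m + 1) : ℝ) : EReal) := by
    ext z
    simp only [Set.mem_Iio, Set.mem_iUnion, Set.mem_Iic]
    constructor
    · intro hz
      induction z using EReal.rec with
      | bot => exact ⟨0, bot_le⟩
      | coe y =>
        have hy : y < sc K 0 := EReal.coe_lt_coe_iff.mp hz
        obtain ⟨m, hm⟩ := exists_nat_one_div_lt (sub_pos.mpr hy)
        exact ⟨m, EReal.coe_le_coe_iff.mpr (by push_cast at hm ⊢; linarith)⟩
      | top => exact absurd hz (not_top_lt)
    · rintro ⟨m, hm⟩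
      refine hm.trans_lt (EReal.coe_lt_coe_iff.mpr ?_)
      have : (0:ℝ) < 1 / (m + 1) := by positivity
      linarith
  have hdir : Directed (· ⊆ ·) (fun m : ℕ => Set.Iic ((sc K 0 - 1 / (m + 1) : ℝ) : EReal)) := by
    apply Monotone.directed_le
    intro m m' hmm
    apply Set.Iic_subset_Iic.mpr
    apply EReal.coe_le_coe_iff.mpr
    have h1 : (1:ℝ) / (m' + 1) ≤ 1 / (m + 1) := by
      apply one_div_le_one_div_of_le (by positivity)
      push_cast; exact_mod_cast Nat.succ_le_succ hmm
    linarith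
  have hIio : μ (Set.Iio ((sc K 0 : ℝ) : EReal)) ≤ ENNReal.ofReal (1 - α) := by
    rw [hunion, hdir.measure_iUnion]
    refine iSup_le fun m => (hIic _ ?_).le
    have h0 : (0:ℝ) < 1/((m:ℝ)+1) := by positivity
    linarith
  refine le_trans (le_of_eq ?_) hIio
  rw [hμ, Measure.add_apply, Measure.smul_apply, Measure.dirac_apply' _ measurableSet_Iio,
    Measure.finset_sum_apply]
  have htop : (⊤ : EReal) ∉ Set.Iio ((sc K 0 : ℝ) : EReal) := by
    simp only [Set.mem_Iio, not_lt]; exact le_top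
  rw [Set.indicator_of_notMem htop]
  simp only [smul_eq_mul, mul_zero, add_zero]
  refine Finset.sum_congr rfl fun k hk => ?_
  rw [Measure.finset_sum_apply, Finset.mul_sum]
  refine Finset.sum_congr rfl fun i hi => ?_
  rw [Measure.smul_apply, Measure.dirac_apply' _ measurableSet_Iio, smul_eq_mul]
  congr 1
  by_cases h : sc k i < sc K 0
  · rw [Set.indicator_of_mem (by simpa [Set.mem_Iio] using EReal.coe_lt_coe_iff.mpr h), if_pos h]
    rfl
  · rw [Set.indicator_of_notMem (by simpa [Set.mem_Iio] using fun hc => h (EReal.coe_lt_coe_iff.mp hc)), if_neg h]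

section AuxDefs

variable {𝒳 𝒴 : Type*} [MeasurableSpace 𝒳] [MeasurableSpace 𝒴]

variable (K K₀ : ℕ)

def extD (d : Fin (K + 1) → ℕ × (ℕ → 𝒳 × 𝒴)) (k : ℕ) : ℕ × (ℕ → 𝒳 × 𝒴) :=
  if h : k < K + 1 then d ⟨k, h⟩ else d ⟨0, Nat.succ_pos K⟩

def trD (d : Fin (K + 1) → ℕ × (ℕ → 𝒳 × 𝒴)) : Fin K₀ → ℕ × (ℕ → 𝒳 × 𝒴) :=
  fun k => extD K d k

def nnD (d : Fin (K + 1) → ℕ × (ℕ → 𝒳 × 𝒴)) (k : ℕ) : ℕ := (extD K d k).1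

variable (A : (Fin K₀ → ℕ × (ℕ → 𝒳 × 𝒴)) → 𝒳 × 𝒴 → ℝ)

def ssD (d : Fin (K + 1) → ℕ × (ℕ → 𝒳 × 𝒴)) (k i : ℕ) : ℝ :=
  A (trD K K₀ d) ((extD K d k).2 i)

def cntD (d : Fin (K + 1) → ℕ × (ℕ → 𝒳 × 𝒴)) (k : ℕ) (t : ℝ) : ℝ≥0∞ :=
  ∑' i : ℕ, if i < nnD K d k ∧ ssD K K₀ A d k i < t then (1:ℝ≥0∞) else 0

def cD (d : Fin (K + 1) → ℕ × (ℕ → 𝒳 × 𝒴)) (j i : ℕ) : ℝ≥0∞ :=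
  ∑ k ∈ (Finset.Ico K₀ (K + 1)).erase j,
    ((nnD K d k : ℝ≥0∞))⁻¹ * cntD K K₀ A d k (ssD K K₀ A d j i)

variable (x : ℝ≥0∞)

def phiD (d : Fin (K + 1) → ℕ × (ℕ → 𝒳 × 𝒴)) (j i : ℕ) : ℝ≥0∞ :=
  if cD K K₀ A d j i ≤ x then 1 else 0

def BD (d : Fin (K + 1) → ℕ × (ℕ → 𝒳 × 𝒴)) (j : ℕ) : ℝ≥0∞ :=
  ((nnD K d j : ℝ≥0∞))⁻¹ * ∑' i : ℕ, if i < nnD K d j then phiD K K₀ A x d j i else 0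

-- evaluation lemmas
lemma cntD_eq (d : Fin (K + 1) → ℕ × (ℕ → 𝒳 × 𝒴)) (k : ℕ) (t : ℝ) :
    cntD K K₀ A d k t
      = ∑ i ∈ Finset.range (nnD K d k), if ssD K K₀ A d k i < t then (1:ℝ≥0∞) else 0 := by
  rw [cntD, tsum_eq_sum (s := Finset.range (nnD K d k))
    (by intro i hi; rw [if_neg]; intro hc; exact hi (Finset.mem_range.mpr hc.1))]
  refine Finset.sum_congr rfl fun i hi => ?_
  have := Finset.mem_range.mp hi
  by_cases h : ssD K K₀ A d k i < t
  · rw [if_pos ⟨this, h⟩, if_pos h]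
  · rw [if_neg (fun hc => h hc.2), if_neg h]

lemma BD_eq (d : Fin (K + 1) → ℕ × (ℕ → 𝒳 × 𝒴)) (j : ℕ) :
    BD K K₀ A x d j
      = ((nnD K d j : ℝ≥0∞))⁻¹ * ∑ i ∈ Finset.range (nnD K d j), phiD K K₀ A x d j i := by
  rw [BD, tsum_eq_sum (s := Finset.range (nnD K d j))
    (by intro i hi; rw [if_neg]; exact fun hc => hi (Finset.mem_range.mpr hc))]
  congr 1
  exact Finset.sum_congr rfl fun i hi => if_pos (Finset.mem_range.mp hi)

-- data evaluation lemmas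
variable {Ω : Type*} (N : ℕ → Ω → ℕ) (Z : ℕ → ℕ → Ω → 𝒳 × 𝒴)

lemma trD_data (hK₀ : K₀ ≤ K) (ω : Ω) :
    trD K K₀ (hierData (K + 1) N Z ω) = hierData K₀ N Z ω := by
  funext k
  have hk : (k : ℕ) < K + 1 := lt_of_lt_of_le k.isLt (by omega)
  simp [trD, extD, dif_pos hk, hierData]

lemma nnD_data (ω : Ω) (k : ℕ) (hk : k < K + 1) :
    nnD K (hierData (K + 1) N Z ω) k = N k ω := by
  simp [nnD, extD, dif_pos hk, hierData]

lemma ssD_data (hK₀ : K₀ ≤ K) (ω : Ω) (k i : ℕ) (hk : k < K + 1) :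
    ssD K K₀ A (hierData (K + 1) N Z ω) k i
      = A (hierData K₀ N Z ω) (Z k i ω) := by
  rw [ssD, trD_data K K₀ N Z hK₀ ω]
  simp [extD, dif_pos hk, hierData]

lemma cntD_data (hK₀ : K₀ ≤ K) (ω : Ω) (k : ℕ) (t : ℝ) (hk : k < K + 1) :
    cntD K K₀ A (hierData (K + 1) N Z ω) k t
      = ∑ i ∈ Finset.range (N k ω),
          if A (hierData K₀ N Z ω) (Z k i ω) < t then (1:ℝ≥0∞) else 0 := by
  rw [cntD_eq, nnD_data K N Z ω k hk]
  exact Finset.sum_congr rfl fun i hi => by rw [ssD_data K K₀ A N Z hK₀ ω k i hk]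

lemma cD_data (hK₀ : K₀ ≤ K) (ω : Ω) (j i : ℕ) (hj : j < K + 1) :
    cD K K₀ A (hierData (K + 1) N Z ω) j i
      = ∑ k ∈ (Finset.Ico K₀ (K + 1)).erase j, ((N k ω : ℝ≥0∞))⁻¹ *
          ∑ i' ∈ Finset.range (N k ω),
            if A (hierData K₀ N Z ω) (Z k i' ω) < A (hierData K₀ N Z ω) (Z j i ω)
            then (1:ℝ≥0∞) else 0 := by
  rw [cD]
  refine Finset.sum_congr rfl fun k hk => ?_
  have hk' : k < K + 1 := (Finset.mem_Ico.mp (Finset.mem_of_mem_erase hk)).2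
  rw [nnD_data K N Z ω k hk', ssD_data K K₀ A N Z hK₀ ω j i hj,
    cntD_data K K₀ A N Z hK₀ ω k _ hk']


lemma phiD_swap (j : ℕ) (hj₀ : K₀ ≤ j) (hj : j < K + 1)
    (d : Fin (K + 1) → ℕ × (ℕ → 𝒳 × 𝒴)) :
    phiD K K₀ A x (fun k => d (Equiv.swap ⟨j, hj⟩ (Fin.last K) k)) K 0
      = phiD K K₀ A x d j 0 := by
  classical
  set σ : Equiv.Perm (Fin (K + 1)) := Equiv.swap ⟨j, hj⟩ (Fin.last K) with hσ
  set f : ℕ → ℕ := fun k => if k = j then K else if k = K then j else k with hf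
  have hflt : ∀ k, k < K + 1 → f k < K + 1 := by
    intro k hk; simp only [hf]; split_ifs <;> omega
  have hσval : ∀ k, ∀ hk : k < K + 1, σ ⟨k, hk⟩ = ⟨f k, hflt k hk⟩ := by
    intro k hk
    apply Fin.ext
    rcases eq_or_ne k j with rfl | h1
    · have h : σ ⟨k, hk⟩ = Fin.last K := by rw [hσ]; exact Equiv.swap_apply_left _ _
      rw [h]
      simp only [hf, Fin.last, if_pos rfl]
    · rcases eq_or_ne k K with rfl | h2
      · have h : σ ⟨k, hk⟩ = ⟨j, hj⟩ := by rw [hσ]; exact Equiv.swap_apply_right _ _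
        rw [h]
        simp [hf, h1]
      · have h : σ ⟨k, hk⟩ = ⟨k, hk⟩ := by
          rw [hσ]
          exact Equiv.swap_apply_of_ne_of_ne
            (by simp only [ne_eq, Fin.mk.injEq]; exact h1)
            (by simp only [ne_eq, Fin.ext_iff, Fin.last]; exact h2)
        rw [h]
        simp only [hf]
        rw [if_neg h1, if_neg h2]
  have hext : ∀ k, (hk : k < K + 1) → extD K (fun k' => d (σ k')) k = extD K d (f k) := by
    intro k hk
    rw [extD, dif_pos hk, extD, dif_pos (hflt k hk)]
    rw [hσval k hk]
  have htr : trD K K₀ (fun k' => d (σ k')) = trD K K₀ d := by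
    funext k
    have hk : (k : ℕ) < K + 1 := by have := k.isLt; omega
    have hfk : f (k : ℕ) = (k : ℕ) := by
      have := k.isLt
      simp only [hf]
      rw [if_neg (by omega), if_neg (by omega)]
    rw [trD, trD, hext _ hk, hfk]
  have hnn : ∀ k, k < K + 1 → nnD K (fun k' => d (σ k')) k = nnD K d (f k) := by
    intro k hk; rw [nnD, nnD, hext _ hk]
  have hss : ∀ k i, k < K + 1 → ssD K K₀ A (fun k' => d (σ k')) k i = ssD K K₀ A d (f k) i := by
    intro k i hk; rw [ssD, ssD, htr, hext _ hk]
  have hcnt : ∀ k t, k < K + 1 →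
      cntD K K₀ A (fun k' => d (σ k')) k t = cntD K K₀ A d (f k) t := by
    intro k t hk
    rw [cntD, cntD]
    refine tsum_congr fun i => ?_
    rw [hnn _ hk, hss _ _ hk]
  have hfK : f K = j := by simp only [hf]; split_ifs <;> omega
  have hc : cD K K₀ A (fun k' => d (σ k')) K 0 = cD K K₀ A d j 0 := by
    rw [cD, cD]
    refine Finset.sum_nbij' f f ?_ ?_ ?_ ?_ ?_
    · intro a ha
      simp only [Finset.mem_erase, Finset.mem_Ico] at ha ⊢
      simp only [hf]; split_ifs <;> omega
    · intro a ha
      simp only [Finset.mem_erase, Finset.mem_Ico] at ha ⊢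
      simp only [hf]; split_ifs <;> omega
    · intro a ha
      simp only [Finset.mem_erase, Finset.mem_Ico] at ha
      simp only [hf]; split_ifs <;> omega
    · intro a ha
      simp only [Finset.mem_erase, Finset.mem_Ico] at ha
      simp only [hf]; split_ifs <;> omega
    · intro a ha
      simp only [Finset.mem_erase, Finset.mem_Ico] at ha
      have ha1 : a < K + 1 := ha.2.2
      rw [hnn _ ha1, hcnt _ _ ha1, hss _ _ (by omega), hfK]
  rw [phiD, phiD, hc]

lemma phiD_reseq (j : ℕ) (hj₀ : K₀ ≤ j) (hj : j < K + 1) (m : ℕ)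
    (σ : Equiv.Perm (Fin m)) (d : Fin (K + 1) → ℕ × (ℕ → 𝒳 × 𝒴)) :
    phiD K K₀ A x
      (fun k => if (k : ℕ) = j then ((d k).1, fun i => (d k).2 (permExt σ i)) else d k) j 0
      = phiD K K₀ A x d j (permExt σ 0) := by
  classical
  set d' : Fin (K + 1) → ℕ × (ℕ → 𝒳 × 𝒴) :=
    fun k => if (k : ℕ) = j then ((d k).1, fun i => (d k).2 (permExt σ i)) else d k with hd'
  have hextne : ∀ k, k < K + 1 → k ≠ j → extD K d' k = extD K d k := by
    intro k hk hne
    rw [extD, dif_pos hk, extD, dif_pos hk]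
    show (if ((⟨k, hk⟩ : Fin (K+1)) : ℕ) = j then _ else d ⟨k, hk⟩) = d ⟨k, hk⟩
    rw [if_neg hne]
  have hextj : extD K d' j = ((extD K d j).1, fun i => (extD K d j).2 (permExt σ i)) := by
    rw [extD, dif_pos hj, extD, dif_pos hj]
    show (if ((⟨j, hj⟩ : Fin (K+1)) : ℕ) = j then _ else _) = _
    rw [if_pos rfl]
  have htr : trD K K₀ d' = trD K K₀ d := by
    funext k
    have hk : (k : ℕ) < K + 1 := by have := k.isLt; omega
    rw [trD, trD, hextne _ hk (by have := k.isLt; omega)]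
  have hnn : ∀ k, k < K + 1 → nnD K d' k = nnD K d k := by
    intro k hk
    rcases eq_or_ne k j with rfl | hne
    · rw [nnD, nnD, hextj]
    · rw [nnD, nnD, hextne _ hk hne]
  have hss_ne : ∀ k i, k < K + 1 → k ≠ j → ssD K K₀ A d' k i = ssD K K₀ A d k i := by
    intro k i hk hne; rw [ssD, ssD, htr, hextne _ hk hne]
  have hssj : ssD K K₀ A d' j 0 = ssD K K₀ A d j (permExt σ 0) := by
    rw [ssD, ssD, htr, hextj]
  have hcnt : ∀ k t, k < K + 1 → k ≠ j → cntD K K₀ A d' k t = cntD K K₀ A d k t := by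
    intro k t hk hne
    rw [cntD, cntD]
    refine tsum_congr fun i => ?_
    rw [hnn _ hk, hss_ne _ _ hk hne]
  have hc : cD K K₀ A d' j 0 = cD K K₀ A d j (permExt σ 0) := by
    rw [cD, cD]
    refine Finset.sum_congr rfl fun k hk => ?_
    simp only [Finset.mem_erase, Finset.mem_Ico] at hk
    rw [hnn _ hk.2.2, hcnt _ _ hk.2.2 hk.1, hssj]
  rw [phiD, phiD, hc]

lemma dataZ'_eq {Ω : Type*} (N : ℕ → Ω → ℕ) (Z : ℕ → ℕ → Ω → 𝒳 × 𝒴) (j m : ℕ)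
    (σ : Equiv.Perm (Fin m)) (ω : Ω) :
    hierData (K + 1) N (fun k' i => if k' = j then Z k' (permExt σ i) else Z k' i) ω
      = fun k : Fin (K + 1) =>
          if (k : ℕ) = j
          then ((hierData (K + 1) N Z ω k).1, fun i => (hierData (K + 1) N Z ω k).2 (permExt σ i))
          else hierData (K + 1) N Z ω k := by
  funext k
  simp only [hierData]
  by_cases h : (k : ℕ) = j
  · simp [h]
  · simp [h]

-- measurability
lemma measurable_extD (k : ℕ) : Measurable (fun d : Fin (K + 1) → ℕ × (ℕ → 𝒳 × 𝒴) => extD K d k) := by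
  unfold extD
  by_cases h : k < K + 1
  · simp only [dif_pos h]; exact measurable_pi_apply _
  · simp only [dif_neg h]; exact measurable_pi_apply _

lemma measurable_trD : Measurable (fun d : Fin (K + 1) → ℕ × (ℕ → 𝒳 × 𝒴) => trD K K₀ d) :=
  measurable_pi_lambda _ fun k => measurable_extD K (k : ℕ)

lemma measurable_nnD (k : ℕ) : Measurable (fun d : Fin (K + 1) → ℕ × (ℕ → 𝒳 × 𝒴) => nnD K d k) :=
  measurable_fst.comp (measurable_extD K k)

lemma measurable_inv_nnD (k : ℕ) :
    Measurable (fun d : Fin (K + 1) → ℕ × (ℕ → 𝒳 × 𝒴) => ((nnD K d k : ℝ≥0∞))⁻¹) :=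
  (Measurable.of_discrete (f := fun n : ℕ => ((n : ℝ≥0∞))⁻¹)).comp (measurable_nnD K k)

variable (hA : Measurable fun p : (Fin K₀ → ℕ × (ℕ → 𝒳 × 𝒴)) × (𝒳 × 𝒴) => A p.1 p.2)
include hA

lemma measurable_ssD (k i : ℕ) :
    Measurable (fun d : Fin (K + 1) → ℕ × (ℕ → 𝒳 × 𝒴) => ssD K K₀ A d k i) := by
  have h1 : Measurable (fun d : Fin (K + 1) → ℕ × (ℕ → 𝒳 × 𝒴) => (extD K d k).2 i) :=
    (measurable_pi_apply i).comp (measurable_snd.comp (measurable_extD K k))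
  exact hA.comp ((measurable_trD K K₀).prodMk h1)

lemma measurable_cntD_ssD (k j i : ℕ) :
    Measurable (fun d : Fin (K + 1) → ℕ × (ℕ → 𝒳 × 𝒴) =>
      cntD K K₀ A d k (ssD K K₀ A d j i)) := by
  unfold cntD
  refine Measurable.ennreal_tsum fun i' => ?_
  refine Measurable.ite ?_ measurable_const measurable_const
  have h1 : MeasurableSet {d : Fin (K + 1) → ℕ × (ℕ → 𝒳 × 𝒴) | i' < nnD K d k} :=
    (measurable_nnD K k) (MeasurableSet.of_discrete (s := {n : ℕ | i' < n}))
  have h2 : MeasurableSet {d : Fin (K + 1) → ℕ × (ℕ → 𝒳 × 𝒴) |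
      ssD K K₀ A d k i' < ssD K K₀ A d j i} :=
    measurableSet_lt (measurable_ssD K K₀ A hA k i') (measurable_ssD K K₀ A hA j i)
  exact h1.inter h2

lemma measurable_cD (j i : ℕ) :
    Measurable (fun d : Fin (K + 1) → ℕ × (ℕ → 𝒳 × 𝒴) => cD K K₀ A d j i) := by
  unfold cD
  exact Finset.measurable_sum _ fun k _ =>
    (measurable_inv_nnD K k).mul (measurable_cntD_ssD K K₀ A hA k j i)

lemma measurable_phiD (j i : ℕ) :
    Measurable (fun d : Fin (K + 1) → ℕ × (ℕ → 𝒳 × 𝒴) => phiD K K₀ A x d j i) := by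
  unfold phiD
  exact Measurable.ite ((measurable_cD K K₀ A hA j i) measurableSet_Iic)
    measurable_const measurable_const

lemma measurable_BD (j : ℕ) :
    Measurable (fun d : Fin (K + 1) → ℕ × (ℕ → 𝒳 × 𝒴) => BD K K₀ A x d j) := by
  unfold BD
  refine (measurable_inv_nnD K j).mul ?_
  refine Measurable.ennreal_tsum fun i => ?_
  refine Measurable.ite ?_ (measurable_phiD K K₀ A x hA j i) measurable_const
  exact (measurable_nnD K j) (MeasurableSet.of_discrete (s := {n : ℕ | i < n}))

end AuxDefs

end HCPAux

/-- **Theorem (Marginal coverage for HCP, upper bound).**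
In the HCP setting, if moreover the scores of observations lying in distinct groups
(among the calibration and test groups) are almost surely distinct, then
`P(Y_test ∈ Ĉ(X_test)) ≤ 1 - α + 2/(K₁+1)`. -/
theorem hcp_marginal_coverage_upper
    {𝒳 𝒴 Ω : Type*} [MeasurableSpace 𝒳] [MeasurableSpace 𝒴] [MeasurableSpace Ω]
    (P : Measure Ω) [IsProbabilityMeasure P]
    (K K₀ : ℕ) (hK₀ : K₀ ≤ K)
    (N : ℕ → Ω → ℕ) (Z : ℕ → ℕ → Ω → 𝒳 × 𝒴)
    (hN : ∀ k ω, 1 ≤ N k ω)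
    (hNmeas : ∀ k, Measurable (N k)) (hZmeas : ∀ k i, Measurable (Z k i))
    (hexch : HierExch (K + 1) P N Z)
    (α : ℝ) (hα₀ : 0 < α) (hα₁ : α < 1)
    (A : (Fin K₀ → ℕ × (ℕ → 𝒳 × 𝒴)) → 𝒳 × 𝒴 → ℝ)
    (hA : Measurable fun p : (Fin K₀ → ℕ × (ℕ → 𝒳 × 𝒴)) × (𝒳 × 𝒴) => A p.1 p.2)
    (hdist : ∀ᵐ ω ∂P, ∀ k k', K₀ ≤ k → k ≤ K → K₀ ≤ k' → k' ≤ K → k ≠ k' →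
      ∀ i < N k ω, ∀ i' < N k' ω,
        A (hierData K₀ N Z ω) (Z k i ω) ≠ A (hierData K₀ N Z ω) (Z k' i' ω)) :
    P {ω | (A (hierData K₀ N Z ω) (Z K 0 ω) : EReal)
        ≤ hcpThreshold α K₀ K (fun k => N k ω)
            fun k i => A (hierData K₀ N Z ω) (Z k i ω)}
      ≤ ENNReal.ofReal (1 - α + 2 / (((K - K₀ : ℕ) : ℝ) + 1)) := by
  classical
  have hK₁0 : ((K - K₀ + 1 : ℕ) : ℝ≥0∞) ≠ 0 := Nat.cast_ne_zero.mpr (by omega)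
  have hK₁top : ((K - K₀ + 1 : ℕ) : ℝ≥0∞) ≠ ⊤ := ENNReal.natCast_ne_top _
  have hdm : Measurable (hierData (K + 1) N Z) :=
    measurable_pi_lambda _ fun k =>
      (hNmeas k).prodMk (measurable_pi_lambda _ fun i => hZmeas k i)
  set x : ℝ≥0∞ := ((K - K₀ + 1 : ℕ) : ℝ≥0∞) * ENNReal.ofReal (1 - α) with hx
  have hIcoE : (Finset.Ico K₀ (K + 1)).erase K = Finset.Ico K₀ K := by
    ext a; simp only [Finset.mem_erase, Finset.mem_Ico]; omega
  -- Step 0: inclusion of events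
  have hsub : {ω | (A (hierData K₀ N Z ω) (Z K 0 ω) : EReal)
        ≤ hcpThreshold α K₀ K (fun k => N k ω)
            fun k i => A (hierData K₀ N Z ω) (Z k i ω)}
      ⊆ {ω | cD K K₀ A (hierData (K + 1) N Z ω) K 0 ≤ x} := by
    intro ω hω
    simp only [Set.mem_setOf_eq] at hω ⊢
    have h1 := quantile_lemma α K₀ K (fun k => N k ω)
      (fun k i => A (hierData K₀ N Z ω) (Z k i ω)) hω
    have h2 : cD K K₀ A (hierData (K + 1) N Z ω) K 0
        = ((K - K₀ + 1 : ℕ) : ℝ≥0∞) * ∑ k ∈ Finset.Ico K₀ K,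
            (((K - K₀ + 1 : ℕ) : ℝ≥0∞) * ((N k ω : ℕ) : ℝ≥0∞))⁻¹ *
            ∑ i ∈ Finset.range (N k ω),
              if A (hierData K₀ N Z ω) (Z k i ω) < A (hierData K₀ N Z ω) (Z K 0 ω)
              then (1:ℝ≥0∞) else 0 := by
      rw [cD_data K K₀ A N Z hK₀ ω K 0 (by omega), hIcoE, Finset.mul_sum]
      refine Finset.sum_congr rfl fun k hk => ?_
      rw [← mul_assoc]
      congr 1
      rw [ENNReal.mul_inv (Or.inl hK₁0) (Or.inl hK₁top), ← mul_assoc,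
        ENNReal.mul_inv_cancel hK₁0 hK₁top, one_mul]
    rw [h2, hx]
    exact mul_le_mul_right h1 _
  refine le_trans (measure_mono hsub) ?_
  set E₁ : Set Ω := {ω | cD K K₀ A (hierData (K + 1) N Z ω) K 0 ≤ x} with hE₁
  have hE₁m : MeasurableSet E₁ :=
    ((measurable_cD K K₀ A hA K 0).comp hdm) measurableSet_Iic
  have hPE₁ : P E₁ = ∫⁻ ω, phiD K K₀ A x (hierData (K + 1) N Z ω) K 0 ∂P := by
    rw [← lintegral_indicator_one hE₁m]
    refine lintegral_congr fun ω => ?_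
    by_cases h : cD K K₀ A (hierData (K + 1) N Z ω) K 0 ≤ x
    · rw [Set.indicator_of_mem (show ω ∈ E₁ from h), phiD, if_pos h]; rfl
    · rw [Set.indicator_of_notMem (show ω ∉ E₁ from h), phiD, if_neg h]
  -- Step 1: swap step
  have hswap : ∀ j, K₀ ≤ j → ∀ hj : j < K + 1,
      ∫⁻ ω, phiD K K₀ A x (hierData (K + 1) N Z ω) K 0 ∂P
        = ∫⁻ ω, phiD K K₀ A x (hierData (K + 1) N Z ω) j 0 ∂P := by
    intro j hj₀ hj
    have hφm : Measurable fun d : Fin (K + 1) → ℕ × (ℕ → 𝒳 × 𝒴) => phiD K K₀ A x d K 0 :=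
      measurable_phiD K K₀ A x hA K 0
    have hgm : Measurable fun ω => fun k : Fin (K + 1) =>
        hierData (K + 1) N Z ω (Equiv.swap ⟨j, hj⟩ (Fin.last K) k) :=
      measurable_pi_lambda _ fun k => (measurable_pi_apply _).comp hdm
    have h2 : ∫⁻ ω, phiD K K₀ A x
          (fun k => hierData (K + 1) N Z ω (Equiv.swap ⟨j, hj⟩ (Fin.last K) k)) K 0 ∂P
        = ∫⁻ ω, phiD K K₀ A x (hierData (K + 1) N Z ω) K 0 ∂P := by
      rw [← lintegral_map hφm hgm, ← lintegral_map hφm hdm, hexch.1 (Equiv.swap ⟨j, hj⟩ (Fin.last K))]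
    rw [← h2]
    exact lintegral_congr fun ω => phiD_swap K K₀ A x j hj₀ hj (hierData (K + 1) N Z ω)
  -- Step 2: within-group step
  have hφmω : ∀ j i, Measurable fun ω => phiD K K₀ A x (hierData (K + 1) N Z ω) j i :=
    fun j i => (measurable_phiD K K₀ A x hA j i).comp hdm
  have hBmω : ∀ j, Measurable fun ω => BD K K₀ A x (hierData (K + 1) N Z ω) j :=
    fun j => (measurable_BD K K₀ A x hA j).comp hdm
  have hwithin : ∀ j, K₀ ≤ j → ∀ hj : j < K + 1,
      ∫⁻ ω, phiD K K₀ A x (hierData (K + 1) N Z ω) j 0 ∂P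
        = ∫⁻ ω, BD K K₀ A x (hierData (K + 1) N Z ω) j ∂P := by
    intro j hj₀ hj
    have hpart : ∀ f : Ω → ℝ≥0∞, ∫⁻ ω, f ω ∂P = ∑' m : ℕ, ∫⁻ ω in {ω | N j ω = m}, f ω ∂P := by
      intro f
      have hu : (⋃ m : ℕ, {ω | N j ω = m}) = Set.univ := by
        ext ω; simp
      rw [← setLIntegral_univ, ← hu,
        lintegral_iUnion (s := fun m : ℕ => {ω | N j ω = m})
          (fun m => hNmeas j (measurableSet_singleton m))]
      intro m m' hne
      rw [Function.onFun, Set.disjoint_left]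
      intro ω h1 h2
      exact hne (h1.symm.trans h2)
    rw [hpart, hpart]
    refine tsum_congr fun m => ?_
    rcases Nat.eq_zero_or_pos m with rfl | hm
    · have h0 : {ω | N j ω = 0} = ∅ := by
        ext ω; simp only [Set.mem_setOf_eq, Set.mem_empty_iff_false, iff_false]
        have := hN j ω; omega
      rw [h0]; simp
    rcases eq_or_ne (P {ω | N j ω = m}) 0 with hz | hz
    · rw [setLIntegral_measure_zero _ _ hz, setLIntegral_measure_zero _ _ hz]
    have hEm : MeasurableSet {ω | N j ω = m} := hNmeas j (measurableSet_singleton m)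
    have hPpos : 0 < P {ω | N j ω = m} := pos_iff_ne_zero.mpr hz
    have hPne : P {ω | N j ω = m} ≠ ⊤ := measure_ne_top P _
    have key : ∀ i, i < m →
        ∫⁻ ω in {ω | N j ω = m}, phiD K K₀ A x (hierData (K + 1) N Z ω) j i ∂P
          = ∫⁻ ω in {ω | N j ω = m}, phiD K K₀ A x (hierData (K + 1) N Z ω) j 0 ∂P := by
      intro i hi
      set σ : Equiv.Perm (Fin m) := Equiv.swap ⟨0, hm⟩ ⟨i, hi⟩ with hσ
      have hmap := hexch.2 j (by omega) m hPpos σ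
      have hZ'm : Measurable (hierData (K + 1) N
          fun k' i' => if k' = j then Z k' (permExt σ i') else Z k' i') := by
        refine measurable_pi_lambda _ fun k => (hNmeas _).prodMk (measurable_pi_lambda _ fun i' => ?_)
        by_cases h : (k : ℕ) = j
        · simp only [if_pos h]; exact hZmeas _ _
        · simp only [if_neg h]; exact hZmeas _ _
      have hφm0 : Measurable fun d : Fin (K + 1) → ℕ × (ℕ → 𝒳 × 𝒴) => phiD K K₀ A x d j 0 :=
        measurable_phiD K K₀ A x hA j 0
      have h3 : ∫⁻ ω, phiD K K₀ A x (hierData (K + 1) N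
            (fun k' i' => if k' = j then Z k' (permExt σ i') else Z k' i') ω) j 0
            ∂(P[|{ω | N j ω = m}])
          = ∫⁻ ω, phiD K K₀ A x (hierData (K + 1) N Z ω) j 0 ∂(P[|{ω | N j ω = m}]) := by
        rw [← lintegral_map hφm0 hZ'm, ← lintegral_map hφm0 hdm, hmap]
      have h4 : ∀ ω, phiD K K₀ A x (hierData (K + 1) N
            (fun k' i' => if k' = j then Z k' (permExt σ i') else Z k' i') ω) j 0
          = phiD K K₀ A x (hierData (K + 1) N Z ω) j i := by
        intro ω
        rw [dataZ'_eq K N Z j m σ ω,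
          phiD_reseq K K₀ A x j hj₀ hj m σ (hierData (K + 1) N Z ω)]
        have hperm : permExt σ 0 = i := by
          rw [permExt, dif_pos hm, hσ]
          simp [Equiv.swap_apply_left]
        rw [hperm]
      have h5 : ∫⁻ ω, phiD K K₀ A x (hierData (K + 1) N Z ω) j i ∂(P[|{ω | N j ω = m}])
          = ∫⁻ ω, phiD K K₀ A x (hierData (K + 1) N Z ω) j 0 ∂(P[|{ω | N j ω = m}]) :=
        (lintegral_congr h4).symm.trans h3
      rw [ProbabilityTheory.cond, lintegral_smul_measure, lintegral_smul_measure] at h5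
      exact (ENNReal.mul_right_inj (ENNReal.inv_ne_zero.mpr hPne)
        (ENNReal.inv_ne_top.mpr hz)).mp h5
    have hsumEm : ∫⁻ ω in {ω | N j ω = m}, BD K K₀ A x (hierData (K + 1) N Z ω) j ∂P
        = ((m : ℕ) : ℝ≥0∞)⁻¹ * ∑ i ∈ Finset.range m,
            ∫⁻ ω in {ω | N j ω = m}, phiD K K₀ A x (hierData (K + 1) N Z ω) j i ∂P := by
      have hcong : ∀ ω ∈ {ω | N j ω = m}, BD K K₀ A x (hierData (K + 1) N Z ω) j
          = ((m : ℕ) : ℝ≥0∞)⁻¹ * ∑ i ∈ Finset.range m,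
              phiD K K₀ A x (hierData (K + 1) N Z ω) j i := by
        intro ω hω
        rw [BD_eq, nnD_data K N Z ω j hj, show N j ω = m from hω]
      rw [setLIntegral_congr_fun_ae hEm (Filter.Eventually.of_forall hcong),
        lintegral_const_mul _ (Finset.measurable_sum _ fun i _ => hφmω j i),
        lintegral_finset_sum _ fun i _ => hφmω j i]
    rw [hsumEm, Finset.sum_congr rfl fun i hi => key i (Finset.mem_range.mp hi),
      Finset.sum_const, Finset.card_range, nsmul_eq_mul, ← mul_assoc,
      ENNReal.inv_mul_cancel (Nat.cast_ne_zero.mpr (by omega)) (ENNReal.natCast_ne_top m),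
      one_mul]
  -- Step 3: combine
  have hmain : ((K - K₀ + 1 : ℕ) : ℝ≥0∞) * P E₁ ≤ x + 2 := by
    have h6 : ∀ j ∈ Finset.Ico K₀ (K + 1),
        ∫⁻ ω, BD K K₀ A x (hierData (K + 1) N Z ω) j ∂P = P E₁ := by
      intro j hj
      obtain ⟨hj₀, hj1⟩ := Finset.mem_Ico.mp hj
      rw [← hwithin j hj₀ hj1, ← hswap j hj₀ hj1, hPE₁]
    have h7 : ∑ j ∈ Finset.Ico K₀ (K + 1),
        ∫⁻ ω, BD K K₀ A x (hierData (K + 1) N Z ω) j ∂P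
        = ((K - K₀ + 1 : ℕ) : ℝ≥0∞) * P E₁ := by
      rw [Finset.sum_congr rfl h6, Finset.sum_const, Nat.card_Ico, nsmul_eq_mul]
      congr 2
      omega
    rw [← h7, ← lintegral_finset_sum _ fun j _ => hBmω j]
    have hb : ∀ᵐ ω ∂P, ∑ j ∈ Finset.Ico K₀ (K + 1),
        BD K K₀ A x (hierData (K + 1) N Z ω) j ≤ x + 2 := by
      filter_upwards [hdist] with ω hω
      have heq : ∑ j ∈ Finset.Ico K₀ (K + 1), BD K K₀ A x (hierData (K + 1) N Z ω) j
          = ∑ j ∈ Finset.Ico K₀ (K + 1), ((N j ω : ℕ) : ℝ≥0∞)⁻¹ *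
              ∑ i ∈ Finset.range (N j ω),
                (if (∑ k ∈ (Finset.Ico K₀ (K + 1)).erase j, ((N k ω : ℕ) : ℝ≥0∞)⁻¹ *
                    ∑ i' ∈ Finset.range (N k ω),
                      (if A (hierData K₀ N Z ω) (Z k i' ω) < A (hierData K₀ N Z ω) (Z j i ω)
                        then (1:ℝ≥0∞) else 0)) ≤ x
                  then (1:ℝ≥0∞) else 0) := by
        refine Finset.sum_congr rfl fun j hj => ?_
        obtain ⟨hj₀, hj1⟩ := Finset.mem_Ico.mp hj
        rw [BD_eq, nnD_data K N Z ω j hj1]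
        congr 1
        refine Finset.sum_congr rfl fun i hi => ?_
        rw [phiD, cD_data K K₀ A N Z hK₀ ω j i hj1]
      rw [heq]
      refine count_lemma (Finset.Ico K₀ (K + 1)) (fun k => N k ω)
        (fun k i => A (hierData K₀ N Z ω) (Z k i ω)) x ?_
      intro k hk k' hk' hne i hi i' hi'
      obtain ⟨hk1, hk2⟩ := Finset.mem_Ico.mp hk
      obtain ⟨hk'1, hk'2⟩ := Finset.mem_Ico.mp hk'
      exact hω k k' hk1 (by omega) hk'1 (by omega) hne i hi i' hi'
    calc ∫⁻ ω, ∑ j ∈ Finset.Ico K₀ (K + 1), BD K K₀ A x (hierData (K + 1) N Z ω) j ∂P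
        ≤ ∫⁻ _ω, x + 2 ∂P := lintegral_mono_ae hb
      _ = x + 2 := by simp
  -- Step 4: arithmetic
  have h8 : P E₁ = ((K - K₀ + 1 : ℕ) : ℝ≥0∞)⁻¹ * (((K - K₀ + 1 : ℕ) : ℝ≥0∞) * P E₁) := by
    rw [← mul_assoc, ENNReal.inv_mul_cancel hK₁0 hK₁top, one_mul]
  rw [h8]
  refine le_trans (mul_le_mul_right hmain _) ?_
  rw [hx, mul_add, ← mul_assoc, ENNReal.inv_mul_cancel hK₁0 hK₁top, one_mul]
  have h9 : ((K - K₀ + 1 : ℕ) : ℝ≥0∞)⁻¹ * 2 = ENNReal.ofReal (2 / (((K - K₀ : ℕ) : ℝ) + 1)) := by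
    rw [ENNReal.ofReal_div_of_pos (by positivity), ENNReal.div_eq_inv_mul]
    congr 1
    · congr 1
      rw [show ((K - K₀ : ℕ) : ℝ) + 1 = ((K - K₀ + 1 : ℕ) : ℝ) by push_cast; ring,
        ENNReal.ofReal_natCast]
    · rw [ENNReal.ofReal_ofNat]
  rw [h9, ← ENNReal.ofReal_add (by linarith) (by positivity)]
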